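/- arXiv:math/0305177 — 3 statements merged into one kernel-verified Lean document; each statement's English description precedes it below -/
import Mathlib

section
/- Let f, g : [0, π/2] → ℝ be C² functions with f(0) = g(0) = 1, f'(0) = g'(0) = 0, f'' + a(s)·f = 0 with a(s) ≤ 1, g'' + g = 0, and f, g > 0 on [0, s₁] for some 0 < s₁ ≤ π/2. If f(s₁) = g(s₁), then a(s) = 1 and f(s) = g(s) for all s ∈ [0, s₁]. -/
/-- **Equality case of the Sturm comparison theorem (Lemma 1.2 of the paper).**
Let `f, g : [0, π/2] → ℝ` be `C²` with `f 0 = g 0 = 1`, `f' 0 = g' 0 = 0`,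
`f'' + a s * f = 0` with `a s ≤ 1`, `g'' + g = 0`, and `f, g > 0` on `[0, s₁]`
for some `0 < s₁ ≤ π/2`.  If `f s₁ = g s₁`, then `a s = 1` and `f s = g s`
for all `s ∈ [0, s₁]`. -/
theorem sturm_comparison_equality_case
    (f g a : ℝ → ℝ) (s₁ : ℝ)
    (hs₁ : 0 < s₁) (hs₁' : s₁ ≤ Real.pi / 2)
    (hf : ContDiff ℝ 2 f) (hg : ContDiff ℝ 2 g)
    (hf0 : f 0 = 1) (hg0 : g 0 = 1)
    (hf'0 : deriv f 0 = 0) (hg'0 : deriv g 0 = 0)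
    (hfeq : ∀ s ∈ Set.Icc (0 : ℝ) (Real.pi / 2), deriv (deriv f) s + a s * f s = 0)
    (ha : ∀ s ∈ Set.Icc (0 : ℝ) (Real.pi / 2), a s ≤ 1)
    (hgeq : ∀ s ∈ Set.Icc (0 : ℝ) (Real.pi / 2), deriv (deriv g) s + g s = 0)
    (hfpos : ∀ s ∈ Set.Icc (0 : ℝ) s₁, 0 < f s)
    (hgpos : ∀ s ∈ Set.Icc (0 : ℝ) s₁, 0 < g s)
    (heq : f s₁ = g s₁) :
    ∀ s ∈ Set.Icc (0 : ℝ) s₁, a s = 1 ∧ f s = g s := by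
  have hsub : Set.Icc (0:ℝ) s₁ ⊆ Set.Icc 0 (Real.pi/2) := Set.Icc_subset_Icc le_rfl hs₁'
  -- differentiability facts
  have hf2 : ContDiff ℝ ((1:WithTop ℕ∞)+1) f := by exact_mod_cast hf
  have hg2 : ContDiff ℝ ((1:WithTop ℕ∞)+1) g := by exact_mod_cast hg
  have hfd : Differentiable ℝ f := (contDiff_succ_iff_deriv.mp hf2).1
  have hgd : Differentiable ℝ g := (contDiff_succ_iff_deriv.mp hg2).1
  have hf1 : ContDiff ℝ ((0:WithTop ℕ∞)+1) (deriv f) := by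
    exact_mod_cast (contDiff_succ_iff_deriv.mp hf2).2.2
  have hg1 : ContDiff ℝ ((0:WithTop ℕ∞)+1) (deriv g) := by
    exact_mod_cast (contDiff_succ_iff_deriv.mp hg2).2.2
  have hfd' : Differentiable ℝ (deriv f) := (contDiff_succ_iff_deriv.mp hf1).1
  have hgd' : Differentiable ℝ (deriv g) := (contDiff_succ_iff_deriv.mp hg1).1
  have hFc : Continuous (deriv (deriv f)) :=
    ((contDiff_succ_iff_deriv.mp hf1).2.2).continuous
  have hGc : Continuous (deriv (deriv g)) :=
    ((contDiff_succ_iff_deriv.mp hg1).2.2).continuous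
  -- the Wronskian
  set W : ℝ → ℝ := fun s => deriv f s * g s - f s * deriv g s with hW
  have hWderiv : ∀ s : ℝ, HasDerivAt W
      (deriv (deriv f) s * g s - f s * deriv (deriv g) s) s := by
    intro s
    have h1 := ((hfd' s).hasDerivAt.mul (hgd s).hasDerivAt).sub
      ((hfd s).hasDerivAt.mul (hgd' s).hasDerivAt)
    exact h1.congr_deriv (by ring)
  have hWd : Differentiable ℝ W := fun s => (hWderiv s).differentiableAt
  have hW0 : W 0 = 0 := by simp [hW, hf0, hg0, hf'0, hg'0]
  have hWmono : MonotoneOn W (Set.Icc 0 s₁) := by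
    apply monotoneOn_of_deriv_nonneg (convex_Icc 0 s₁) hWd.continuous.continuousOn
      hWd.differentiableOn
    intro x hx
    rw [interior_Icc] at hx
    have hx' : x ∈ Set.Icc (0:ℝ) s₁ := Set.Ioo_subset_Icc_self hx
    have hxp : x ∈ Set.Icc (0:ℝ) (Real.pi/2) := hsub hx'
    rw [(hWderiv x).deriv]
    have e1 := hfeq x hxp
    have e2 := hgeq x hxp
    have h3 := ha x hxp
    have h4 := hfpos x hx'
    have h5 := hgpos x hx'
    have eF : deriv (deriv f) x = -(a x * f x) := by linarith
    have eG : deriv (deriv g) x = -(g x) := by linarith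
    rw [eF, eG]
    nlinarith [mul_nonneg (mul_nonneg (sub_nonneg.mpr h3) h4.le) h5.le]
  have hWnn : ∀ s ∈ Set.Icc (0:ℝ) s₁, 0 ≤ W s := by
    intro s hs
    have := hWmono (Set.left_mem_Icc.mpr hs₁.le) hs hs.1
    linarith [hW0]
  -- the quotient f/g is monotone on [0, s₁]
  have hqmono : MonotoneOn (fun s => f s / g s) (Set.Icc 0 s₁) := by
    apply monotoneOn_of_deriv_nonneg (convex_Icc 0 s₁)
    · exact ContinuousOn.div hfd.continuous.continuousOn hgd.continuous.continuousOn
        (fun x hx => (hgpos x hx).ne')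
    · intro x hx
      rw [interior_Icc] at hx
      have hne : g x ≠ 0 := (hgpos x (Set.Ioo_subset_Icc_self hx)).ne'
      exact (((hfd x).hasDerivAt.div (hgd x).hasDerivAt hne).differentiableAt).differentiableWithinAt
    · intro x hx
      rw [interior_Icc] at hx
      have hx' : x ∈ Set.Icc (0:ℝ) s₁ := Set.Ioo_subset_Icc_self hx
      have hne : g x ≠ 0 := (hgpos x hx').ne'
      show 0 ≤ deriv (f / g) x
      rw [((hfd x).hasDerivAt.div (hgd x).hasDerivAt hne).deriv]
      have h1 := hWnn x hx'
      have h2 : 0 < g x ^ 2 := by positivity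
      apply div_nonneg _ h2.le
      simpa [hW] using h1
  have hffg : ∀ s ∈ Set.Icc (0:ℝ) s₁, f s = g s := by
    intro s hs
    have h0m : (0:ℝ) ∈ Set.Icc (0:ℝ) s₁ := Set.left_mem_Icc.mpr hs₁.le
    have h1m : s₁ ∈ Set.Icc (0:ℝ) s₁ := Set.right_mem_Icc.mpr hs₁.le
    have hle1 := hqmono h0m hs hs.1
    have hle2 := hqmono hs h1m hs.2
    have e0 : f 0 / g 0 = 1 := by rw [hf0, hg0]; norm_num
    have e1 : f s₁ / g s₁ = 1 := by rw [heq]; exact div_self (hgpos s₁ h1m).ne'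
    have : f s / g s = 1 := le_antisymm (by simpa [e1] using hle2) (by simpa [e0] using hle1)
    have hne : g s ≠ 0 := (hgpos s hs).ne'
    field_simp at this
    exact this
  -- first and second derivatives agree on the open interval
  have hd1 : ∀ s ∈ Set.Ioo (0:ℝ) s₁, deriv f s = deriv g s := by
    intro s hs
    apply Filter.EventuallyEq.deriv_eq
    filter_upwards [Ioo_mem_nhds hs.1 hs.2] with x hx
    exact hffg x (Set.Ioo_subset_Icc_self hx)
  have hd2 : ∀ s ∈ Set.Ioo (0:ℝ) s₁, deriv (deriv f) s = deriv (deriv g) s := by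
    intro s hs
    apply Filter.EventuallyEq.deriv_eq
    filter_upwards [Ioo_mem_nhds hs.1 hs.2] with x hx
    exact hd1 x hx
  have hd2' : ∀ s ∈ Set.Icc (0:ℝ) s₁, deriv (deriv f) s = deriv (deriv g) s := by
    have hcl : Set.Icc (0:ℝ) s₁ ⊆ closure (Set.Ioo (0:ℝ) s₁) := by
      rw [closure_Ioo hs₁.ne]
    intro s hs
    have : s ∈ closure (Set.Ioo (0:ℝ) s₁) := hcl hs
    have hsubset : closure (Set.Ioo (0:ℝ) s₁) ⊆
        {x | deriv (deriv f) x = deriv (deriv g) x} :=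
      closure_minimal (fun x hx => hd2 x hx) (isClosed_eq hFc hGc)
    exact hsubset this
  intro s hs
  have hxp : s ∈ Set.Icc (0:ℝ) (Real.pi/2) := hsub hs
  have e1 := hfeq s hxp
  have e2 := hgeq s hxp
  have e3 := hd2' s hs
  have e4 := hffg s hs
  have e5 := hfpos s hs
  refine ⟨?_, e4⟩
  have : a s * f s = 1 * f s := by rw [one_mul]; nlinarith
  exact mul_right_cancel₀ e5.ne' this
end

section
/- In the Berger 3-sphere (S³, g_η), the Hopf fiber, i.e., the orbit of the one-parameter subgroup t ↦ exp(t·i), is a closed geodesic of length 2πη. -/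
noncomputable section

namespace Berger

/-- The Lie algebra `su(2) = Im ℍ` of the unit quaternions `S³`, identified with
`Fin 3 → ℝ` with basis `i = e 0`, `j = e 1`, `k = e 2`; the bracket is the
quaternionic commutator, so `[i,j] = 2k`, `[j,k] = 2i`, `[k,i] = 2j`. -/
def br (x y : Fin 3 → ℝ) : Fin 3 → ℝ :=
  ![2 * (x 1 * y 2 - x 2 * y 1), 2 * (x 2 * y 0 - x 0 * y 2),
    2 * (x 0 * y 1 - x 1 * y 0)]

/-- The Berger metric `g_η` on the Lie algebra: `i, j, k` are orthogonal,
`‖j‖ = ‖k‖ = 1` and `‖i‖ = η` (the Hopf fibers are scaled by `η`). -/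
def g (η : ℝ) (x y : Fin 3 → ℝ) : ℝ :=
  η ^ 2 * (x 0 * y 0) + x 1 * y 1 + x 2 * y 2

/-- The standard basis `i = e 0`, `j = e 1`, `k = e 2`. -/
def e (a : Fin 3) : Fin 3 → ℝ := fun b => if a = b then 1 else 0

/-- The Levi-Civita connection of the left-invariant metric `g_η`, evaluated on
left-invariant vector fields, determined by the Koszul formula
`2 ⟨∇ₓ y, z⟩ = ⟨[x,y], z⟩ − ⟨[y,z], x⟩ + ⟨[z,x], y⟩`. -/
def nabla (η : ℝ) (x y : Fin 3 → ℝ) : Fin 3 → ℝ := fun a =>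
  (g η (br x y) (e a) - g η (br y (e a)) x + g η (br (e a) x) y) /
    (2 * g η (e a) (e a))

/-- The Riemann curvature tensor on left-invariant fields:
`R(x,y)z = ∇ₓ∇_y z − ∇_y∇ₓ z − ∇_{[x,y]} z`. -/
def R (η : ℝ) (x y z : Fin 3 → ℝ) : Fin 3 → ℝ :=
  nabla η x (nabla η y z) - nabla η y (nabla η x z) - nabla η (br x y) z

/-- The sectional curvature of the plane spanned by `x` and `y` in the Berger
sphere `(S³, g_η)`: `sec(x,y) = ⟨R(x,y)y, x⟩ / (‖x‖²‖y‖² − ⟨x,y⟩²)`. -/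
def sec (η : ℝ) (x y : Fin 3 → ℝ) : ℝ :=
  g η (R η x y y) x / (g η x x * g η y y - g η x y ^ 2)

end Berger

/-- The imaginary quaternion `i`, viewed inside the quaternions. -/
def quaternionI : Quaternion ℝ := ⟨0, 1, 0, 0⟩

/-- **The Hopf fiber of the Berger sphere (S³, g_η) is a closed geodesic of
length `2πη`.**  Identify `S³` with the unit quaternions; the Hopf fiber
through `1` is the one-parameter subgroup `t ↦ exp(t·i)`.  For a left-invariant
metric, a one-parameter subgroup `t ↦ exp(t·X)` is a geodesic if and only if
`∇_X X = 0`; we express this via the Levi-Civita connection `Berger.nabla` on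
the Lie algebra.  The curve is closed of period `2π`, and since it has constant
speed `‖i‖_{g_η} = η`, its length is `√(g_η(i,i)) · 2π = 2πη`. -/
theorem berger_hopf_fiber_closed_geodesic (η : ℝ) (hη : 0 < η) :
    Berger.nabla η (Berger.e 0) (Berger.e 0) = 0 ∧
      Function.Periodic (fun t : ℝ => NormedSpace.exp (t • quaternionI))
        (2 * Real.pi) ∧
      Real.sqrt (Berger.g η (Berger.e 0) (Berger.e 0)) * (2 * Real.pi)
        = 2 * Real.pi * η := by
  refine ⟨?_, ?_, ?_⟩
  · funext a
    fin_cases a <;>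
      simp [Berger.nabla, Berger.br, Berger.g, Berger.e, Fin.ext_iff]
  · have hnorm : ‖quaternionI‖ = 1 := by
      have h1 : Quaternion.normSq quaternionI = 1 := by
        rw [Quaternion.normSq_def']; simp [quaternionI]
      nlinarith [norm_nonneg quaternionI,
        Quaternion.normSq_eq_norm_mul_self quaternionI]
    have hre : quaternionI.re = 0 := rfl
    have hexp : NormedSpace.exp ((2 * Real.pi) • quaternionI) = 1 := by
      rw [Quaternion.exp_of_re_eq_zero]
      · have h2 : ‖(2 * Real.pi) • quaternionI‖ = 2 * Real.pi := by
          rw [norm_smul, hnorm, Real.norm_eq_abs,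
            abs_of_nonneg (by positivity)]
          ring
        rw [h2]
        simp [Real.cos_two_pi, Real.sin_two_pi]
      · simp [hre]
    intro t
    have hcomm : Commute (t • quaternionI) ((2 * Real.pi) • quaternionI) :=
      (Commute.refl quaternionI).smul_left t |>.smul_right _
    simp only [add_smul]
    rw [NormedSpace.exp_add_of_commute_of_mem_ball (𝕂 := ℝ) hcomm
      ((NormedSpace.expSeries_radius_eq_top ℝ (Quaternion ℝ)).symm ▸ edist_lt_top _ _)
      ((NormedSpace.expSeries_radius_eq_top ℝ (Quaternion ℝ)).symm ▸ edist_lt_top _ _), hexp, mul_one]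
  · have : Berger.g η (Berger.e 0) (Berger.e 0) = η ^ 2 := by
      simp [Berger.g, Berger.e]
    rw [this, Real.sqrt_sq hη.le]
    ring
end
end

section
/- Let u : ℝ → ℝ satisfy u'' + a(t)·u = 0 with a(t) ≤ 1 for all t, u(0) = 0, u'(0) = 1. Then u(t) ≥ sin(t) for all t ∈ [0, π]. -/
open Real Set Filter Topology

/-- Auxiliary: on an interval where `u` is positive, `u` dominates `sin`. -/
lemma sturm_key_aux (u a : ℝ → ℝ)
    (hu : ContDiff ℝ 2 u)
    (hueq : ∀ t : ℝ, deriv (deriv u) t + a t * u t = 0)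
    (ha : ∀ t : ℝ, a t ≤ 1)
    (hu0 : u 0 = 0) (hu'0 : deriv u 0 = 1)
    (b : ℝ) (hbπ : b ≤ π)
    (hpos : ∀ t ∈ Ioo (0:ℝ) b, 0 < u t) :
    ∀ t ∈ Ioo (0:ℝ) b, Real.sin t ≤ u t := by
  have hd1 : Differentiable ℝ u := hu.differentiable (by norm_num)
  have hu' : ContDiff ℝ 1 (deriv u) := by
    have h : ContDiff ℝ ((1:ℕ) + 1) u := by exact_mod_cast hu
    rw [contDiff_succ_iff_deriv] at h
    exact_mod_cast h.2.2
  have hd2 : Differentiable ℝ (deriv u) := hu'.differentiable one_ne_zero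
  set W : ℝ → ℝ := fun t => deriv u t * Real.sin t - u t * Real.cos t with hWdef
  have hWd : ∀ t, HasDerivAt W ((1 - a t) * (u t * Real.sin t)) t := by
    intro t
    have h1 : HasDerivAt (fun s => deriv u s * Real.sin s)
        (deriv (deriv u) t * Real.sin t + deriv u t * Real.cos t) t :=
      ((hd2 t).hasDerivAt).mul (Real.hasDerivAt_sin t)
    have h2 : HasDerivAt (fun s => u s * Real.cos s)
        (deriv u t * Real.cos t + u t * (-Real.sin t)) t :=
      ((hd1 t).hasDerivAt).mul (Real.hasDerivAt_cos t)
    have h3 := h1.sub h2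
    refine h3.congr_deriv ?_
    have heq : deriv (deriv u) t = -(a t * u t) := by linarith [hueq t]
    rw [heq]; ring
  have hWcont : Continuous W := by
    exact (hu'.continuous.mul Real.continuous_sin).sub (hd1.continuous.mul Real.continuous_cos)
  have hWnn : ∀ t ∈ Icc (0:ℝ) b, 0 ≤ W t := by
    have hmono : MonotoneOn W (Icc 0 b) := by
      apply monotoneOn_of_deriv_nonneg (convex_Icc 0 b) hWcont.continuousOn
      · intro t _
        exact (hWd t).differentiableAt.differentiableWithinAt
      · rw [interior_Icc]
        intro t ht
        rw [(hWd t).deriv]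
        have h1 : 0 < u t := hpos t ht
        have h2 : 0 ≤ Real.sin t :=
          Real.sin_nonneg_of_nonneg_of_le_pi ht.1.le (le_trans ht.2.le hbπ)
        have h3 : 0 ≤ 1 - a t := by linarith [ha t]
        positivity
    intro t ht
    have hW0 : W 0 = 0 := by simp [hWdef, hu0]
    have := hmono (left_mem_Icc.mpr (ht.1.trans ht.2)) ht ht.1
    rwa [hW0] at this
  set g : ℝ → ℝ := fun t => u t / Real.sin t with hgdef
  have hsinpos : ∀ t ∈ Ioo (0:ℝ) b, 0 < Real.sin t := fun t ht =>
    Real.sin_pos_of_pos_of_lt_pi ht.1 (lt_of_lt_of_le ht.2 hbπ)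
  have hgmono : MonotoneOn g (Ioo 0 b) := by
    apply monotoneOn_of_deriv_nonneg (convex_Ioo 0 b)
    · exact ContinuousOn.div hd1.continuous.continuousOn Real.continuous_sin.continuousOn
        (fun t ht => (hsinpos t ht).ne')
    · rw [interior_Ioo]
      intro t ht
      exact (((hd1 t).hasDerivAt.div (Real.hasDerivAt_sin t)
        (hsinpos t ht).ne')).differentiableAt.differentiableWithinAt
    · rw [interior_Ioo]
      intro t ht
      rw [show deriv g t = _ from ((hd1 t).hasDerivAt.div (Real.hasDerivAt_sin t) (hsinpos t ht).ne').deriv]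
      have h1 : 0 ≤ W t := hWnn t ⟨ht.1.le, ht.2.le⟩
      have h2 : (0:ℝ) < Real.sin t ^ 2 := pow_pos (hsinpos t ht) 2
      exact div_nonneg h1 h2.le
  have hlim : Tendsto g (𝓝[>] (0:ℝ)) (𝓝 1) := by
    have h1 : Tendsto (fun t => u t / t) (𝓝[>] (0:ℝ)) (𝓝 1) := by
      have hh := (hd1 0).hasDerivAt
      rw [hasDerivAt_iff_tendsto_slope, hu'0] at hh
      have hh2 := hh.mono_left (nhdsWithin_mono 0
        (fun x hx => ne_of_gt hx : Ioi (0:ℝ) ⊆ {(0:ℝ)}ᶜ))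
      refine hh2.congr ?_
      intro t
      simp [slope_def_field, hu0]
    have h2 : Tendsto (fun t => Real.sin t / t) (𝓝[>] (0:ℝ)) (𝓝 1) := by
      have hh := Real.hasDerivAt_sin 0
      rw [hasDerivAt_iff_tendsto_slope, Real.cos_zero] at hh
      have hh2 := hh.mono_left (nhdsWithin_mono 0
        (fun x hx => ne_of_gt hx : Ioi (0:ℝ) ⊆ {(0:ℝ)}ᶜ))
      refine hh2.congr ?_
      intro t
      simp [slope_def_field]
    have h3 : Tendsto (fun t => t / Real.sin t) (𝓝[>] (0:ℝ)) (𝓝 1) := by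
      have := h2.inv₀ one_ne_zero
      simpa using this
    have h4 := h1.mul h3
    rw [one_mul] at h4
    refine h4.congr' ?_
    filter_upwards [self_mem_nhdsWithin] with t ht
    have ht0 : t ≠ 0 := ne_of_gt ht
    field_simp
    rfl
  intro t ht
  have hs : 0 < Real.sin t := hsinpos t ht
  have hg1 : 1 ≤ g t := by
    refine le_of_tendsto hlim ?_
    filter_upwards [Ioo_mem_nhdsGT_of_mem (⟨le_refl 0, ht.1⟩ : (0:ℝ) ∈ Ico 0 t)] with s hs'
    exact hgmono ⟨hs'.1, hs'.2.trans ht.2⟩ ht hs'.2.le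
  have : Real.sin t ≤ g t * Real.sin t := by nlinarith
  rwa [hgdef, div_mul_cancel₀ _ hs.ne'] at this

/-- **Scalar Sturm comparison with Dirichlet initial conditions.**
If `u'' + a t * u = 0` with `a t ≤ 1` for all `t`, `u 0 = 0` and `u' 0 = 1`,
then `u t ≥ sin t` for all `t ∈ [0, π]`. -/
theorem sturm_comparison_dirichlet
    (u a : ℝ → ℝ)
    (hu : ContDiff ℝ 2 u)
    (hueq : ∀ t : ℝ, deriv (deriv u) t + a t * u t = 0)
    (ha : ∀ t : ℝ, a t ≤ 1)
    (hu0 : u 0 = 0) (hu'0 : deriv u 0 = 1) :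
    ∀ t ∈ Set.Icc (0 : ℝ) Real.pi, Real.sin t ≤ u t := by
  have hd1 : Differentiable ℝ u := hu.differentiable (by norm_num)
  -- u is positive near 0 on the right
  have h1 : Tendsto (fun t => u t / t) (𝓝[>] (0:ℝ)) (𝓝 1) := by
    have hh := (hd1 0).hasDerivAt
    rw [hasDerivAt_iff_tendsto_slope, hu'0] at hh
    have hh2 := hh.mono_left (nhdsWithin_mono 0
      (fun x hx => ne_of_gt hx : Ioi (0:ℝ) ⊆ {(0:ℝ)}ᶜ))
    refine hh2.congr ?_
    intro t
    simp [slope_def_field, hu0]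
  have hnear : ∀ᶠ t in 𝓝[>] (0:ℝ), 0 < u t := by
    have h2 : ∀ᶠ t in 𝓝[>] (0:ℝ), 0 < u t / t := by
      apply h1.eventually
      exact eventually_gt_nhds one_pos
    filter_upwards [h2, self_mem_nhdsWithin] with t h ht
    have : 0 < u t / t * t := mul_pos h ht
    rwa [div_mul_cancel₀ _ (ne_of_gt ht)] at this
  obtain ⟨e, he, hepos⟩ : ∃ e, 0 < e ∧ ∀ t ∈ Ioo (0:ℝ) e, 0 < u t := by
    rw [eventually_nhdsWithin_iff] at hnear
    obtain ⟨e, he, hsub⟩ := Metric.eventually_nhds_iff.mp hnear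
    exact ⟨e, he, fun t ht => hsub (by
      rw [Real.dist_eq, sub_zero, abs_of_pos ht.1]; exact ht.2) ht.1⟩
  have hpos : ∀ t ∈ Ioo (0:ℝ) π, 0 < u t := by
    by_contra h
    push_neg at h
    obtain ⟨t0, ht0, ht0'⟩ := h
    set Z := {t | t ∈ Ioo (0:ℝ) π ∧ u t ≤ 0} with hZdef
    have hZne : Z.Nonempty := ⟨t0, ht0, ht0'⟩
    have hZbdd : BddBelow Z := ⟨0, fun t ht => ht.1.1.le⟩
    set z := sInf Z with hzdef
    have hzmem : z ∈ closure Z := csInf_mem_closure hZne hZbdd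
    have hzub : ∀ t ∈ Z, z ≤ t := fun t ht => csInf_le hZbdd ht
    have hcl : closure Z ⊆ {t | u t ≤ 0} ∩ Icc 0 π := by
      apply closure_minimal
      · intro t ht
        exact ⟨ht.2, ht.1.1.le, ht.1.2.le⟩
      · exact (isClosed_le hd1.continuous continuous_const).inter isClosed_Icc
    have hz0 : u z ≤ 0 := (hcl hzmem).1
    have hzlt : z < π := lt_of_le_of_lt (hzub t0 ⟨ht0, ht0'⟩) ht0.2
    have hzge : e ≤ z := by
      refine le_csInf hZne ?_
      intro t ht
      by_contra hlt
      push_neg at hlt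
      exact absurd ht.2 (not_le.mpr (hepos t ⟨ht.1.1, hlt⟩))
    have hzpos : 0 < z := lt_of_lt_of_le he hzge
    have hkey := sturm_key_aux u a hu hueq ha hu0 hu'0 z hzlt.le (fun t ht => by
      by_contra hc
      push_neg at hc
      have htZ : t ∈ Z := ⟨⟨ht.1, ht.2.trans hzlt⟩, hc⟩
      exact absurd (hzub t htZ) (not_le.mpr ht.2))
    have hsinz : 0 < Real.sin z := Real.sin_pos_of_pos_of_lt_pi hzpos hzlt
    have hle : Real.sin z ≤ u z := by
      have hlu : Tendsto u (𝓝[<] z) (𝓝 (u z)) :=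
        (hd1.continuous.tendsto z).mono_left nhdsWithin_le_nhds
      have hls : Tendsto Real.sin (𝓝[<] z) (𝓝 (Real.sin z)) :=
        (Real.continuous_sin.tendsto z).mono_left nhdsWithin_le_nhds
      refine le_of_tendsto_of_tendsto hls hlu ?_
      filter_upwards [Ioo_mem_nhdsLT_of_mem (⟨hzpos, le_refl z⟩ : z ∈ Ioc (0:ℝ) z)] with s hs
      exact hkey s hs
    linarith
  have hkey := sturm_key_aux u a hu hueq ha hu0 hu'0 π le_rfl hpos
  intro t ht
  rcases eq_or_lt_of_le ht.1 with h0 | h0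
  · rw [← h0, hu0, Real.sin_zero]
  rcases eq_or_lt_of_le ht.2 with hπ | hπ
  · rw [hπ, Real.sin_pi]
    have hlu : Tendsto u (𝓝[<] π) (𝓝 (u π)) :=
      (hd1.continuous.tendsto π).mono_left nhdsWithin_le_nhds
    refine ge_of_tendsto hlu ?_
    filter_upwards [Ioo_mem_nhdsLT_of_mem (⟨Real.pi_pos, le_refl π⟩ : π ∈ Ioc (0:ℝ) π)] with s hs
    exact le_trans (Real.sin_nonneg_of_nonneg_of_le_pi hs.1.le hs.2.le) (hkey s hs)
  · exact hkey t ⟨h0, hπ⟩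
end
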